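/- Let L₁ and L₂ be countable classes of linear orders such that every member of L₁ ∪ L₂ is isomorphic to a linear order of the form ω·i + K where ω·i is not isomorphic to any interval of K (i ≥ 1 fixed). Then Shuf(L₁) ≅ Shuf(L₂) if and only if L₁ and L₂ contain the same linear orders up to isomorphism. -/

import Mathlib

/-- `c : ℚ → I` is a dense `I`-coloring. -/
def DenseColoring {I : Type} (c : ℚ → I) : Prop :=
  ∀ x y : ℚ, x < y → ∀ i : I, ∃ z : ℚ, x < z ∧ z < y ∧ c z = i

/-- `L` is of the form `ω·i + K` where `ω·i` (here `Lex (Fin i × ℕ)`) is not isomorphic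
to any interval of `K`. -/
def OmegaIPlus (i : ℕ) (L : Type) [LinearOrder L] : Prop :=
  ∃ (K : Type) (_ : LinearOrder K),
    Nonempty (L ≃o (Lex (Fin i × ℕ) ⊕ₗ K)) ∧
    ∀ s : Set K, s.OrdConnected → ¬ Nonempty (↥s ≃o Lex (Fin i × ℕ))

open Set
set_option linter.unusedSectionVars false
set_option maxHeartbeats 1000000
namespace ShuffleAux
noncomputable section




variable {α β : Type*}

/-- image of a set under an order iso, as an order iso of subtypes -/
def isoImage [Preorder α] [Preorder β] (e : α ≃o β) (s : Set α) : ↥s ≃o ↥(e '' s) where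
  toEquiv := e.toEquiv.image s
  map_rel_iff' := by intro a b; exact e.le_iff_le

lemma isoImage_rw [Preorder α] [Preorder β] (e : α ≃o β) {s : Set α} {t : Set β}
    (h : e '' s = t) : Nonempty (↥s ≃o ↥t) := ⟨h ▸ isoImage e s⟩

variable {Q : Type*} [LinearOrder Q] {f : Q → Type*} [∀ x, LinearOrder (f x)]

lemma fst_mono {p q : Σₗ x, f x} (h : p ≤ q) : p.1 ≤ q.1 := by
  rcases Sigma.Lex.le_def.1 h with h1 | ⟨h1, _⟩
  · exact le_of_lt h1
  · exact le_of_eq h1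

/-- the block of index `x` in the lexicographic sigma -/
def blk (f : Q → Type*) [∀ x, LinearOrder (f x)] (x : Q) : Set (Σₗ x, f x) :=
  {p | p.1 = x}

lemma mem_blk {x y : Q} {a : f y} : (toLex ⟨y, a⟩ : Σₗ x, f x) ∈ blk f x ↔ y = x := Iff.rfl

lemma blk_ordConnected (x : Q) : (blk f x).OrdConnected := by
  constructor
  rintro p hp q hq r ⟨h1, h2⟩
  have := le_antisymm ((fst_mono h2).trans hq.le) (hp.ge.trans (fst_mono h1))
  exact this

/-- the block is order isomorphic to the fiber -/
def blkIso (x : Q) : ↥(blk f x) ≃o f x := by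
  refine (StrictMono.orderIsoOfSurjective
    (fun a => (⟨toLex ⟨x, a⟩, rfl⟩ : ↥(blk f x))) (fun a b hab => ?_) ?_).symm
  · exact Sigma.Lex.lt_def.2 (Or.inr ⟨rfl, hab⟩)
  · rintro ⟨⟨y, a⟩, hy⟩
    have : y = x := hy
    subst this
    exact ⟨a, rfl⟩




variable {Q : Type*} [LinearOrder Q] {f : Q → Type*} [∀ x, LinearOrder (f x)]



/-- embedding a subset of a fiber into the sigma -/
def emb (x : Q) (P : Set (f x)) : Set (Σₗ x, f x) :=
  (fun a => toLex ⟨x, a⟩) '' P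

lemma emb_ordConnected {x : Q} {P : Set (f x)} (hP : P.OrdConnected) :
    (emb x P).OrdConnected := by
  constructor
  rintro p ⟨a, ha, rfl⟩ q ⟨b, hb, rfl⟩ r ⟨h1, h2⟩
  obtain ⟨y, c⟩ := r
  have hxy : y = x := le_antisymm (fst_mono h2) (fst_mono h1)
  subst hxy
  rcases Sigma.Lex.le_def.1 h1 with h | ⟨_, h⟩
  · exact absurd h (lt_irrefl _)
  · rcases Sigma.Lex.le_def.1 h2 with h' | ⟨_, h'⟩
    · exact absurd h' (lt_irrefl _)
    · exact ⟨c, hP.out ha hb ⟨h, h'⟩, rfl⟩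

/-- the embedded set is order isomorphic to the original -/
def embIso (x : Q) (P : Set (f x)) : ↥(emb x P) ≃o ↥P := by
  refine (StrictMono.orderIsoOfSurjective
    (fun a => (⟨toLex ⟨x, a.1⟩, ⟨a.1, a.2, rfl⟩⟩ : ↥(emb x P)))
    (fun a b hab => ?_) ?_).symm
  · exact Sigma.Lex.lt_def.2 (Or.inr ⟨rfl, hab⟩)
  · rintro ⟨p, a, ha, rfl⟩
    exact ⟨⟨a, ha⟩, rfl⟩

/-- a subset of a block comes from a subset of the fiber -/
lemma subset_blk_emb {x : Q} {S : Set (Σₗ x, f x)} (hS : ∀ p ∈ S, p.1 = x) :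
    ∃ P : Set (f x), emb x P = S ∧
      (S.OrdConnected → P.OrdConnected) ∧ Nonempty (↥S ≃o ↥P) := by
  refine ⟨{a | toLex ⟨x, a⟩ ∈ S}, ?_, ?_, ?_⟩
  · ext p
    constructor
    · rintro ⟨a, ha, rfl⟩; exact ha
    · intro hp
      obtain ⟨y, a⟩ := p
      have : y = x := hS _ hp
      subst this
      exact ⟨a, hp, rfl⟩
  · intro h
    constructor
    intro a ha b hb c ⟨h1, h2⟩
    exact h.out ha hb ⟨Sigma.Lex.le_def.2 (Or.inr ⟨rfl, h1⟩), Sigma.Lex.le_def.2 (Or.inr ⟨rfl, h2⟩)⟩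
  · refine ⟨(StrictMono.orderIsoOfSurjective
      (fun a => (⟨toLex ⟨x, a.1⟩, a.2⟩ : ↥S)) (fun a b hab => ?_) ?_).symm⟩
    · exact Sigma.Lex.lt_def.2 (Or.inr ⟨rfl, hab⟩)
    · rintro ⟨⟨y, a⟩, hp⟩
      have : y = x := hS _ hp
      subst this
      exact ⟨⟨a, hp⟩, rfl⟩



abbrev W (i : ℕ) := Lex (Fin i × ℕ)

instance (i : ℕ) : WellFoundedLT (W i) := by
  unfold W
  infer_instance

lemma W_nonempty {i : ℕ} (hi : 1 ≤ i) : Nonempty (W i) :=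
  ⟨toLex (⟨0, hi⟩, 0)⟩

lemma sum_cases {α β : Type*} (p : α ⊕ₗ β) :
    (∃ a, p = toLex (Sum.inl a)) ∨ (∃ b, p = toLex (Sum.inr b)) := by
  rcases h : ofLex p with a | b
  · exact Or.inl ⟨a, by rw [← toLex_ofLex p, h]⟩
  · exact Or.inr ⟨b, by rw [← toLex_ofLex p, h]⟩

variable {K : Type*} [LinearOrder K]

/-- ordconnectedness of the left part of a lex sum -/
lemma inl_range_ordConnected {α β : Type*} [Preorder α] [Preorder β] :
    (range (fun a : α => (toLex (Sum.inl a) : α ⊕ₗ β))).OrdConnected := by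
  constructor
  rintro p ⟨a, rfl⟩ q ⟨b, rfl⟩ r ⟨_, h2⟩
  rcases sum_cases r with ⟨c, rfl⟩ | ⟨c, rfl⟩
  · exact ⟨c, rfl⟩
  · exact absurd h2 (Sum.Lex.not_inr_le_inl)

/-- Key lemma: any ord-connected subset of `ω·i + K` isomorphic to `ω·i`
(where `K` has no such interval) has its left part cofinal in `ω·i`. -/
lemma cofinal_left {i : ℕ}
    (hK : ∀ s : Set K, s.OrdConnected → ¬ Nonempty (↥s ≃o W i))
    {S : Set (W i ⊕ₗ K)} (hS : S.OrdConnected) (e : ↥S ≃o W i) (m : W i) :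
    ∃ a : W i, m ≤ a ∧ toLex (Sum.inl a) ∈ S := by
  by_contra hcon
  push_neg at hcon
  have hlt : ∀ a : W i, toLex (Sum.inl a) ∈ S → a < m := by
    intro a ha
    by_contra h
    exact hcon a (le_of_not_gt h) ha
  by_cases hr : ∃ k : K, toLex (Sum.inr k) ∈ S
  · obtain ⟨k, hk⟩ := hr
    by_cases hl : ∃ a : W i, toLex (Sum.inl a) ∈ S
    · obtain ⟨a, ha⟩ := hl
      have hmem : toLex (Sum.inl (max a m)) ∈ S :=
        hS.out ha hk ⟨Sum.Lex.inl_le_inl_iff.2 (le_max_left a m), Sum.Lex.inl_le_inr _ _⟩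
      exact absurd (hlt _ hmem) (not_lt.2 (le_max_right a m))
    · push_neg at hl
      have hsub : ∀ p ∈ S, ∃ k : K, p = toLex (Sum.inr k) := by
        intro p hp
        rcases sum_cases p with ⟨a, rfl⟩ | ⟨c, rfl⟩
        · exact absurd hp (hl a)
        · exact ⟨c, rfl⟩
      set Sr : Set K := {k | toLex (Sum.inr k) ∈ S} with hSr
      have hSrc : Sr.OrdConnected := by
        constructor
        intro a ha b hb c hc
        exact hS.out ha hb ⟨Sum.Lex.inr_le_inr_iff.2 hc.1, Sum.Lex.inr_le_inr_iff.2 hc.2⟩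
      refine hK Sr hSrc ⟨(OrderIso.trans ?_ e)⟩
      refine StrictMono.orderIsoOfSurjective
        (fun a => (⟨toLex (Sum.inr a.1), a.2⟩ : ↥S)) (fun a b hab => ?_) ?_
      · exact Sum.Lex.inr_lt_inr_iff.2 hab
      · rintro ⟨p, hp⟩
        obtain ⟨k', rfl⟩ := hsub p hp
        exact ⟨⟨k', hp⟩, rfl⟩
  · push_neg at hr
    have hsub : ∀ p ∈ S, ∃ a : W i, p = toLex (Sum.inl a) := by
      intro p hp
      rcases sum_cases p with ⟨a, rfl⟩ | ⟨c, rfl⟩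
      · exact ⟨a, rfl⟩
      · exact absurd hp (hr c)
    set Sl : Set (W i) := {a | toLex (Sum.inl a) ∈ S} with hSl
    have eSl : ↥Sl ≃o ↥S := by
      refine StrictMono.orderIsoOfSurjective
        (fun a => (⟨toLex (Sum.inl a.1), a.2⟩ : ↥S)) (fun a b hab => ?_) ?_
      · exact Sum.Lex.inl_lt_inl_iff.2 hab
      · rintro ⟨p, hp⟩
        obtain ⟨a, rfl⟩ := hsub p hp
        exact ⟨⟨a, hp⟩, rfl⟩
    have hmono : StrictMono (fun w : W i => (((eSl.trans e).symm w : ↥Sl) : W i)) := by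
      intro a b hab
      exact Subtype.coe_lt_coe.2 ((eSl.trans e).symm.strictMono hab)
    have hle := hmono.le_apply (x := m)
    exact absurd (hlt _ ((eSl.trans e).symm m).2) (not_lt.2 hle)

/-- Lemma A : two ord-connected subsets of `ω·i + K` each iso to `ω·i` intersect. -/
lemma intersect_of_iso {i : ℕ} (hi : 1 ≤ i)
    (hK : ∀ s : Set K, s.OrdConnected → ¬ Nonempty (↥s ≃o W i))
    {S T : Set (W i ⊕ₗ K)} (hS : S.OrdConnected) (hT : T.OrdConnected)
    (eS : ↥S ≃o W i) (eT : ↥T ≃o W i) : (S ∩ T).Nonempty := by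
  obtain ⟨m⟩ := W_nonempty hi
  obtain ⟨a, _, ha⟩ := cofinal_left hK hS eS m
  obtain ⟨b, hab, hb⟩ := cofinal_left hK hT eT a
  obtain ⟨a', hba', ha'⟩ := cofinal_left hK hS eS b
  have : toLex (Sum.inl b) ∈ S :=
    hS.out ha ha' ⟨Sum.Lex.inl_le_inl_iff.2 hab, Sum.Lex.inl_le_inl_iff.2 hba'⟩
  exact ⟨toLex (Sum.inl b), this, hb⟩


section SepSection

variable {Q : Type*} [LinearOrder Q]

lemma emb_mem_iff {f : Q → Type*} [∀ x, LinearOrder (f x)] {x : Q} {P : Set (f x)} {a : f x} :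
    toLex ⟨x, a⟩ ∈ emb x P ↔ a ∈ P := by
  constructor
  · rintro ⟨a', ha', h⟩
    obtain ⟨-, h2⟩ := Sigma.mk.inj_iff.1 (congrArg ofLex h)
    rwa [eq_of_heq h2] at ha'
  · intro h; exact ⟨a, h, rfl⟩

/-- `p` and `q` are separated by two disjoint intervals isomorphic to `ω·i`. -/
def Sep (i : ℕ) {T : Type*} [LinearOrder T] (p q : T) : Prop :=
  ∃ A B : Set T, A.OrdConnected ∧ B.OrdConnected ∧
    Nonempty (↥A ≃o W i) ∧ Nonempty (↥B ≃o W i) ∧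
    (∀ s ∈ A, p < s ∧ s < q) ∧ (∀ t ∈ B, p < t ∧ t < q) ∧ (∀ s ∈ A, ∀ t ∈ B, s < t)

lemma Sep.map {i : ℕ} {T U : Type*} [LinearOrder T] [LinearOrder U] (F : T ≃o U)
    {p q : T} (h : Sep i p q) : Sep i (F p) (F q) := by
  obtain ⟨A, B, hA, hB, ⟨eA⟩, ⟨eB⟩, hpa, hpb, hab⟩ := h
  haveI := hA; haveI := hB
  refine ⟨F '' A, F '' B, Set.ordConnected_image F, Set.ordConnected_image F,
    ⟨(isoImage F A).symm.trans eA⟩, ⟨(isoImage F B).symm.trans eB⟩, ?_, ?_, ?_⟩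
  · rintro s ⟨s', hs', rfl⟩
    exact ⟨F.lt_iff_lt.2 (hpa s' hs').1, F.lt_iff_lt.2 (hpa s' hs').2⟩
  · rintro t ⟨t', ht', rfl⟩
    exact ⟨F.lt_iff_lt.2 (hpb t' ht').1, F.lt_iff_lt.2 (hpb t' ht').2⟩
  · rintro s ⟨s', hs', rfl⟩ t ⟨t', ht', rfl⟩
    exact F.lt_iff_lt.2 (hab s' hs' t' ht')

variable {i : ℕ} {f : ℚ → Type} [∀ x, LinearOrder (f x)]

/-- In a shuffle of `ω·i`-prefixed orders, points of the same block are not separated. -/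
lemma not_sep_same_blk (hf : ∀ x, OmegaIPlus i (f x)) (hi : 1 ≤ i)
    {p q : Σₗ x, f x} (hpq : p.1 = q.1) : ¬ Sep i p q := by
  rintro ⟨A, B, hA, hB, ⟨eA⟩, ⟨eB⟩, hpa, hpb, hab⟩
  set x := p.1 with hx
  -- A and B are inside the block of x
  have hblk : ∀ s : (Σₗ x, f x), p < s → s < q → s.1 = x := by
    intro s h1 h2
    have := (blk_ordConnected (f := f) x).out (rfl : p ∈ blk f x) (hpq.symm : q ∈ blk f x)
      ⟨h1.le, h2.le⟩
    exact this
  obtain ⟨PA, hPAe, hPAc, ⟨eA'⟩⟩ :=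
    subset_blk_emb (S := A) (fun s hs => hblk s (hpa s hs).1 (hpa s hs).2)
  obtain ⟨PB, hPBe, hPBc, ⟨eB'⟩⟩ :=
    subset_blk_emb (S := B) (fun s hs => hblk s (hpb s hs).1 (hpb s hs).2)
  obtain ⟨K, instK, ⟨hiso⟩, hK⟩ := hf x
  letI := instK
  haveI hPAc' := hPAc (hPAe ▸ hA)
  haveI hPBc' := hPBc (hPBe ▸ hB)
  have hlt : ∀ a ∈ PA, ∀ b ∈ PB, a < b := by
    intro a ha b hb
    have h1 : (toLex ⟨x, a⟩ : Σₗ x, f x) ∈ A := hPAe ▸ emb_mem_iff.2 ha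
    have h2 : (toLex ⟨x, b⟩ : Σₗ x, f x) ∈ B := hPBe ▸ emb_mem_iff.2 hb
    rcases Sigma.Lex.lt_def.1 (hab _ h1 _ h2) with h | ⟨_, h⟩
    · exact absurd h (lt_irrefl x)
    · exact h
  -- move to W i ⊕ₗ K
  haveI := hPAc'; haveI := hPBc'
  have hAc2 : (hiso '' PA).OrdConnected := Set.ordConnected_image hiso
  have hBc2 : (hiso '' PB).OrdConnected := Set.ordConnected_image hiso
  have eA2 : ↥(hiso '' PA) ≃o W i := (isoImage hiso PA).symm.trans (eA'.symm.trans eA)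
  have eB2 : ↥(hiso '' PB) ≃o W i := (isoImage hiso PB).symm.trans (eB'.symm.trans eB)
  obtain ⟨c, ⟨a, ha, hca⟩, ⟨b, hb, hcb⟩⟩ := intersect_of_iso hi hK hAc2 hBc2 eA2 eB2
  have heq : a = b := hiso.injective (hca.trans hcb.symm)
  subst heq
  exact absurd (hlt a ha a hb) (lt_irrefl a)

/-- Points of different blocks are separated. -/
lemma sep_diff_blk (hf : ∀ x, OmegaIPlus i (f x))
    {p q : Σₗ x, f x} (hpq : p.1 < q.1) : Sep i p q := by
  obtain ⟨z₁, hz₁, hz₁'⟩ := exists_between hpq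
  obtain ⟨z₂, hz₂, hz₂'⟩ := exists_between hz₁'
  -- the prefix interval of block z
  have key : ∀ z : ℚ, ∃ A : Set (Σₗ x, f x), A.OrdConnected ∧ Nonempty (↥A ≃o W i) ∧
      ∀ s ∈ A, s.1 = z := by
    intro z
    obtain ⟨K, instK, ⟨hiso⟩, hK⟩ := hf z
    letI := instK
    set P : Set (f z) := hiso ⁻¹' (range (fun a : W i => (toLex (Sum.inl a) : W i ⊕ₗ K))) with hP
    haveI : (range (fun a : W i => (toLex (Sum.inl a) : W i ⊕ₗ K))).OrdConnected :=
      inl_range_ordConnected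
    have hPc : P.OrdConnected := Set.ordConnected_preimage hiso
    have eP : ↥P ≃o W i := by
      refine (StrictMono.orderIsoOfSurjective
        (fun w => (⟨hiso.symm (toLex (Sum.inl w)), by simp [hP]⟩ : ↥P))
        (fun a b hab => ?_) ?_).symm
      · exact Subtype.mk_lt_mk.2 (hiso.symm.lt_iff_lt.2 (Sum.Lex.inl_lt_inl_iff.2 hab))
      · rintro ⟨a, ha⟩
        obtain ⟨w, hw⟩ := ha
        refine ⟨w, Subtype.ext ?_⟩
        show hiso.symm (toLex (Sum.inl w)) = a
        rw [show toLex (Sum.inl w) = hiso a from hw, OrderIso.symm_apply_apply]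
    refine ⟨emb z P, emb_ordConnected hPc, ⟨(embIso z P).trans eP⟩, ?_⟩
    rintro s ⟨a, ha, rfl⟩
    rfl
  obtain ⟨A, hAc, hAi, hAm⟩ := key z₁
  obtain ⟨B, hBc, hBi, hBm⟩ := key z₂
  refine ⟨A, B, hAc, hBc, hAi, hBi, ?_, ?_, ?_⟩
  · intro s hs
    constructor
    · exact Sigma.Lex.lt_def.2 (Or.inl (by rw [hAm s hs]; exact hz₁))
    · exact Sigma.Lex.lt_def.2 (Or.inl (by rw [hAm s hs]; exact hz₁'))
  · intro t ht
    constructor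
    · exact Sigma.Lex.lt_def.2 (Or.inl (by rw [hBm t ht]; exact hz₁.trans hz₂))
    · exact Sigma.Lex.lt_def.2 (Or.inl (by rw [hBm t ht]; exact hz₂'))
  · intro s hs t ht
    exact Sigma.Lex.lt_def.2 (Or.inl (by rw [hAm s hs, hBm t ht]; exact hz₂))

end SepSection


lemma blocks_to_blocks {i : ℕ} (hi : 1 ≤ i) {f g : ℚ → Type}
    [∀ x, LinearOrder (f x)] [∀ x, LinearOrder (g x)]
    (hf : ∀ x, OmegaIPlus i (f x)) (hg : ∀ x, OmegaIPlus i (g x))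
    (F : (Σₗ x, f x) ≃o (Σₗ x, g x)) (x : ℚ) :
    ∃ y : ℚ, Nonempty (f x ≃o g y) := by
  obtain ⟨K, instK, ⟨hiso⟩, -⟩ := hf x
  letI := instK
  obtain ⟨w⟩ := W_nonempty hi
  set a₀ : f x := hiso.symm (toLex (Sum.inl w)) with ha₀
  set p : Σₗ x, f x := toLex ⟨x, a₀⟩ with hp
  set y : ℚ := (F p).1 with hy
  have same : ∀ p' q' : Σₗ x, f x, p'.1 = q'.1 → (F p').1 = (F q').1 := by
    intro p' q' h
    by_contra hne
    rcases lt_or_gt_of_ne hne with hlt | hlt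
    · have hsep := (sep_diff_blk hg hlt).map F.symm
      rw [F.symm_apply_apply, F.symm_apply_apply] at hsep
      exact not_sep_same_blk hf hi h hsep
    · have hsep := (sep_diff_blk hg hlt).map F.symm
      rw [F.symm_apply_apply, F.symm_apply_apply] at hsep
      exact not_sep_same_blk hf hi h.symm hsep
  have same' : ∀ r' s' : Σₗ x, g x, r'.1 = s'.1 → (F.symm r').1 = (F.symm s').1 := by
    intro r' s' h
    by_contra hne
    rcases lt_or_gt_of_ne hne with hlt | hlt
    · have hsep := (sep_diff_blk hf hlt).map F
      rw [F.apply_symm_apply, F.apply_symm_apply] at hsep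
      exact not_sep_same_blk hg hi h hsep
    · have hsep := (sep_diff_blk hf hlt).map F
      rw [F.apply_symm_apply, F.apply_symm_apply] at hsep
      exact not_sep_same_blk hg hi h.symm hsep
  have himg : F '' blk f x = blk g y := by
    ext r
    constructor
    · rintro ⟨p', hp', rfl⟩
      exact same p' p hp'
    · intro hr
      refine ⟨F.symm r, ?_, F.apply_symm_apply r⟩
      have h1 : (F.symm r).1 = (F.symm (F p)).1 := same' r (F p) hr
      rw [F.symm_apply_apply] at h1
      exact h1
  obtain ⟨e2⟩ := isoImage_rw F himg
  exact ⟨y, ⟨((blkIso x).symm.trans e2).trans (blkIso y)⟩⟩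


section BackForth

open Order

variable {ι₁ ι₂ : Type} (c₁ : ℚ → ι₁) (c₂ : ℚ → ι₂) (R : ι₁ → ι₂ → Prop)

/-- Colored partial order isomorphisms of `ℚ`. -/
def PIso : Type :=
  { fs : Finset (ℚ × ℚ) //
    (∀ p ∈ fs, ∀ q ∈ fs, cmp p.1 q.1 = cmp p.2 q.2) ∧ ∀ p ∈ fs, R (c₁ p.1) (c₂ p.2) }

instance : Inhabited (PIso c₁ c₂ R) :=
  ⟨⟨∅, ⟨fun _ h => absurd h (Finset.notMem_empty _),
        fun _ h => absurd h (Finset.notMem_empty _)⟩⟩⟩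

instance : Preorder (PIso c₁ c₂ R) := Subtype.preorder _

lemma exists_between_finsets_colored {I : Type} {c : ℚ → I} (hc : DenseColoring c)
    (lo hi : Finset ℚ) (h : ∀ x ∈ lo, ∀ y ∈ hi, x < y) (j : I) :
    ∃ b : ℚ, (∀ x ∈ lo, x < b) ∧ (∀ y ∈ hi, b < y) ∧ c b = j := by
  obtain ⟨m, hm1, hm2⟩ := Order.exists_between_finsets lo hi h
  obtain ⟨m', hm'1, hm'2⟩ := Order.exists_between_finsets (insert m lo) hi (by
    intro x hx y hy
    rcases Finset.mem_insert.1 hx with rfl | hx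
    · exact hm2 y hy
    · exact h x hx y hy)
  have hmm' : m < m' := hm'1 m (Finset.mem_insert_self _ _)
  obtain ⟨z, hz1, hz2, hz3⟩ := hc m m' hmm' j
  exact ⟨z, fun x hx => (hm1 x hx).trans hz1, fun y hy => hz2.trans (hm'2 y hy), hz3⟩

variable {c₁ c₂ R}

lemma exists_across_left (hc₂ : DenseColoring c₂) (hR : ∀ j, ∃ j', R j j')
    (fp : PIso c₁ c₂ R) (a : ℚ) :
    ∃ b : ℚ, R (c₁ a) (c₂ b) ∧ ∀ p ∈ fp.val, cmp p.1 a = cmp p.2 b := by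
  by_cases h : ∃ b, (a, b) ∈ fp.val
  · obtain ⟨b, hb⟩ := h
    exact ⟨b, fp.prop.2 _ hb, fun p hp => fp.prop.1 _ hp _ hb⟩
  obtain ⟨j', hj'⟩ := hR (c₁ a)
  have key : ∀ x ∈ (fp.val.filter fun p : ℚ × ℚ => p.1 < a).image Prod.snd,
      ∀ y ∈ (fp.val.filter fun p : ℚ × ℚ => a < p.1).image Prod.snd, x < y := by
    intro x hx y hy
    rw [Finset.mem_image] at hx hy
    rcases hx with ⟨p, hp1, rfl⟩
    rcases hy with ⟨q, hq1, rfl⟩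
    rw [Finset.mem_filter] at hp1 hq1
    rw [← lt_iff_lt_of_cmp_eq_cmp (fp.prop.1 _ hp1.1 _ hq1.1)]
    exact lt_trans hp1.2 hq1.2
  obtain ⟨b, hb1, hb2, hb3⟩ := exists_between_finsets_colored hc₂ _ _ key j'
  refine ⟨b, hb3 ▸ hj', ?_⟩
  rintro ⟨p1, p2⟩ hp
  have hne : p1 ≠ a := fun he => h ⟨p2, he ▸ hp⟩
  rcases lt_or_gt_of_ne hne with hl | hr
  · have h2 : p2 < b :=
      hb1 _ (Finset.mem_image.mpr ⟨(p1, p2), Finset.mem_filter.mpr ⟨hp, hl⟩, rfl⟩)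
    rw [show cmp p1 a = Ordering.lt from (cmp_eq_lt_iff _ _).2 hl,
      show cmp p2 b = Ordering.lt from (cmp_eq_lt_iff _ _).2 h2]
  · have h2 : b < p2 :=
      hb2 _ (Finset.mem_image.mpr ⟨(p1, p2), Finset.mem_filter.mpr ⟨hp, hr⟩, rfl⟩)
    rw [show cmp p1 a = Ordering.gt from (cmp_eq_gt_iff _ _).2 hr,
      show cmp p2 b = Ordering.gt from (cmp_eq_gt_iff _ _).2 h2]

lemma exists_across_right (hc₁ : DenseColoring c₁) (hR : ∀ j', ∃ j, R j j')
    (fp : PIso c₁ c₂ R) (b : ℚ) :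
    ∃ a : ℚ, R (c₁ a) (c₂ b) ∧ ∀ p ∈ fp.val, cmp p.2 b = cmp p.1 a := by
  by_cases h : ∃ a, (a, b) ∈ fp.val
  · obtain ⟨a, ha⟩ := h
    exact ⟨a, fp.prop.2 _ ha, fun p hp => (fp.prop.1 _ hp _ ha).symm⟩
  obtain ⟨j, hj⟩ := hR (c₂ b)
  have key : ∀ x ∈ (fp.val.filter fun p : ℚ × ℚ => p.2 < b).image Prod.fst,
      ∀ y ∈ (fp.val.filter fun p : ℚ × ℚ => b < p.2).image Prod.fst, x < y := by
    intro x hx y hy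
    rw [Finset.mem_image] at hx hy
    rcases hx with ⟨p, hp1, rfl⟩
    rcases hy with ⟨q, hq1, rfl⟩
    rw [Finset.mem_filter] at hp1 hq1
    rw [lt_iff_lt_of_cmp_eq_cmp (fp.prop.1 _ hp1.1 _ hq1.1)]
    exact lt_trans hp1.2 hq1.2
  obtain ⟨a, ha1, ha2, ha3⟩ := exists_between_finsets_colored hc₁ _ _ key j
  refine ⟨a, ha3 ▸ hj, ?_⟩
  rintro ⟨p1, p2⟩ hp
  have hne : p2 ≠ b := fun he => h ⟨p1, he ▸ hp⟩
  rcases lt_or_gt_of_ne hne with hl | hr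
  · have h2 : p1 < a :=
      ha1 _ (Finset.mem_image.mpr ⟨(p1, p2), Finset.mem_filter.mpr ⟨hp, hl⟩, rfl⟩)
    rw [show cmp p2 b = Ordering.lt from (cmp_eq_lt_iff _ _).2 hl,
      show cmp p1 a = Ordering.lt from (cmp_eq_lt_iff _ _).2 h2]
  · have h2 : a < p1 :=
      ha2 _ (Finset.mem_image.mpr ⟨(p1, p2), Finset.mem_filter.mpr ⟨hp, hr⟩, rfl⟩)
    rw [show cmp p2 b = Ordering.gt from (cmp_eq_gt_iff _ _).2 hr,
      show cmp p1 a = Ordering.gt from (cmp_eq_gt_iff _ _).2 h2]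

/-- partial isos defined at `a` on the left are cofinal -/
def definedAtLeftC (hc₂ : DenseColoring c₂) (hR : ∀ j, ∃ j', R j j') (a : ℚ) :
    Cofinal (PIso c₁ c₂ R) where
  carrier := {fp | ∃ b : ℚ, (a, b) ∈ fp.val}
  isCofinal fp := by
    obtain ⟨b, hb, hab⟩ := exists_across_left hc₂ hR fp a
    refine ⟨⟨insert (a, b) fp.val, ⟨fun p hp q hq => ?_, fun p hp => ?_⟩⟩,
      ⟨b, Finset.mem_insert_self _ _⟩, Finset.subset_insert _ _⟩
    · rw [Finset.mem_insert] at hp hq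
      rcases hp with rfl | pf <;> rcases hq with rfl | qf
      · simp only [cmp_self_eq_eq]
      · rw [cmp_eq_cmp_symm]; exact hab _ qf
      · exact hab _ pf
      · exact fp.prop.1 _ pf _ qf
    · rw [Finset.mem_insert] at hp
      rcases hp with rfl | pf
      · exact hb
      · exact fp.prop.2 _ pf

/-- partial isos defined at `b` on the right are cofinal -/
def definedAtRightC (hc₁ : DenseColoring c₁) (hR : ∀ j', ∃ j, R j j') (b : ℚ) :
    Cofinal (PIso c₁ c₂ R) where
  carrier := {fp | ∃ a : ℚ, (a, b) ∈ fp.val}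
  isCofinal fp := by
    obtain ⟨a, ha, hab⟩ := exists_across_right hc₁ hR fp b
    refine ⟨⟨insert (a, b) fp.val, ⟨fun p hp q hq => ?_, fun p hp => ?_⟩⟩,
      ⟨a, Finset.mem_insert_self _ _⟩, Finset.subset_insert _ _⟩
    · rw [Finset.mem_insert] at hp hq
      rcases hp with rfl | pf <;> rcases hq with rfl | qf
      · simp only [cmp_self_eq_eq]
      · rw [cmp_eq_cmp_symm]; exact (hab _ qf).symm
      · exact (hab _ pf).symm
      · exact fp.prop.1 _ pf _ qf
    · rw [Finset.mem_insert] at hp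
      rcases hp with rfl | pf
      · exact ha
      · exact fp.prop.2 _ pf

lemma colored_iso (hc₁ : DenseColoring c₁) (hc₂ : DenseColoring c₂)
    (hR₁ : ∀ j, ∃ j', R j j') (hR₂ : ∀ j', ∃ j, R j j') :
    ∃ g : ℚ ≃o ℚ, ∀ x : ℚ, R (c₁ x) (c₂ (g x)) := by
  let to_cofinal : ℚ ⊕ ℚ → Cofinal (PIso c₁ c₂ R) := fun p =>
    Sum.recOn p (definedAtLeftC hc₂ hR₁) (definedAtRightC hc₁ hR₂)
  let our_ideal : Order.Ideal (PIso c₁ c₂ R) := idealOfCofinals default to_cofinal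
  have hF : ∀ a : ℚ, ∃ b : ℚ, ∃ fp ∈ our_ideal, (a, b) ∈ fp.val := by
    intro a
    obtain ⟨fp, ⟨b, hb⟩, hmem⟩ := cofinal_meets_idealOfCofinals default to_cofinal (Sum.inl a)
    exact ⟨b, fp, hmem, hb⟩
  have hG : ∀ b : ℚ, ∃ a : ℚ, ∃ fp ∈ our_ideal, (a, b) ∈ fp.val := by
    intro b
    obtain ⟨fp, ⟨a, ha⟩, hmem⟩ := cofinal_meets_idealOfCofinals default to_cofinal (Sum.inr b)
    exact ⟨a, fp, hmem, ha⟩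
  choose F hF' using hF
  choose G hG' using hG
  refine ⟨OrderIso.ofCmpEqCmp F G fun a b => ?_, fun a => ?_⟩
  · obtain ⟨fp, hfp, ha⟩ := hF' a
    obtain ⟨gp, hgp, hb⟩ := hG' b
    obtain ⟨m, _, fm, gm⟩ := our_ideal.directed _ hfp _ hgp
    exact m.prop.1 (a, _) (fm ha) (_, b) (gm hb)
  · obtain ⟨fp, _, ha⟩ := hF' a
    exact fp.prop.2 _ ha

end BackForth

/-- matching colorings give isomorphic shuffles -/
lemma shuffle_iso_of_matching {ι₁ ι₂ : Type} (L₁ : ι₁ → Type) (L₂ : ι₂ → Type)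
    [∀ j, LinearOrder (L₁ j)] [∀ j, LinearOrder (L₂ j)]
    (c₁ : ℚ → ι₁) (c₂ : ℚ → ι₂) (g : ℚ ≃o ℚ)
    (hmatch : ∀ x, Nonempty (L₁ (c₁ x) ≃o L₂ (c₂ (g x)))) :
    Nonempty ((Σₗ x, L₁ (c₁ x)) ≃o (Σₗ x, L₂ (c₂ x))) := by
  have e : ∀ x, L₁ (c₁ x) ≃o L₂ (c₂ (g x)) := fun x => Classical.choice (hmatch x)
  refine ⟨StrictMono.orderIsoOfSurjective
    (fun p => toLex ⟨g p.1, e p.1 p.2⟩) ?_ ?_⟩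
  · rintro ⟨x, a⟩ ⟨y, b⟩ h
    rcases Sigma.Lex.lt_def.1 h with h1 | ⟨h1, h2⟩
    · exact Sigma.Lex.lt_def.2 (Or.inl (g.lt_iff_lt.2 h1))
    · dsimp only at h1
      subst h1
      exact Sigma.Lex.lt_def.2 (Or.inr ⟨rfl, (e x).strictMono h2⟩)
  · rintro ⟨y, b⟩
    obtain ⟨x, rfl⟩ := g.surjective y
    refine ⟨toLex (Sigma.mk x ((e x).symm b)), ?_⟩
    exact congrArg (fun z : L₂ (c₂ (g x)) => toLex (⟨g x, z⟩ : (y : ℚ) × L₂ (c₂ y))) ((e x).apply_symm_apply b)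

end
end ShuffleAux


open ShuffleAux in
/-- Let `L₁`, `L₂` be countable classes of linear orders, each member isomorphic to
`ω·i + K` with `ω·i` not an interval of `K`. Then `Shuf(L₁) ≅ Shuf(L₂)` iff the classes
contain the same linear orders up to isomorphism. -/
theorem shuffle_omega_prefixed {i : ℕ} (hi : 1 ≤ i) {ι₁ ι₂ : Type}
    [Countable ι₁] [Countable ι₂]
    (L₁ : ι₁ → Type) (L₂ : ι₂ → Type)
    [∀ j, LinearOrder (L₁ j)] [∀ j, LinearOrder (L₂ j)]
    (h₁ : ∀ j, OmegaIPlus i (L₁ j)) (h₂ : ∀ j, OmegaIPlus i (L₂ j))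
    (c₁ : ℚ → ι₁) (c₂ : ℚ → ι₂)
    (hc₁ : DenseColoring c₁) (hc₂ : DenseColoring c₂) :
    Nonempty ((Lex ((x : ℚ) × L₁ (c₁ x))) ≃o (Lex ((x : ℚ) × L₂ (c₂ x)))) ↔
      ((∀ j, ∃ j', Nonempty (L₁ j ≃o L₂ j')) ∧ (∀ j', ∃ j, Nonempty (L₁ j ≃o L₂ j'))) := by
  constructor
  · rintro ⟨F⟩
    constructor
    · intro j
      obtain ⟨x, -, -, hx⟩ := hc₁ 0 1 one_pos j
      obtain ⟨y, ⟨e⟩⟩ := blocks_to_blocks hi (fun x => h₁ (c₁ x)) (fun x => h₂ (c₂ x)) F x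
      subst hx
      exact ⟨c₂ y, ⟨e⟩⟩
    · intro j'
      obtain ⟨y, -, -, hy⟩ := hc₂ 0 1 one_pos j'
      obtain ⟨x, ⟨e⟩⟩ := blocks_to_blocks hi (fun x => h₂ (c₂ x)) (fun x => h₁ (c₁ x)) F.symm y
      subst hy
      exact ⟨c₁ x, ⟨e.symm⟩⟩
  · rintro ⟨hA, hB⟩
    obtain ⟨g, hg⟩ := colored_iso (R := fun j j' => Nonempty (L₁ j ≃o L₂ j')) hc₁ hc₂ hA hB
    exact shuffle_iso_of_matching L₁ L₂ c₁ c₂ g hg
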